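/- Let A₀, A₁ ≥ 2 be integers and p₀ ∈ (0,1), p₁ = 1 - p₀, and let α* be the matrix with entries α*_{ij} = δ_{ij}(1/A_i + (1 - 1/A_i) p_i) + (1 - δ_{ij})(1 - 1/A_i) p_j. Then the row vector (p, 1-p) with p = p₀A₀(A₁ - 1) / (A₀A₁ - p₁A₁ - p₀A₀) satisfies the equilibrium equation (p, 1-p)·α* = (p, 1-p), and moreover p ∈ (0,1). -/

import Mathlib

/-- The row vector `(p, 1-p)` with
`p = p₀ A₀ (A₁ − 1) / (A₀ A₁ − p₁ A₁ − p₀ A₀)` satisfies the equilibrium equation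
`(p, 1-p) · α* = (p, 1-p)` for the effective transition matrix `α*`, and `p ∈ (0,1)`. -/
theorem stmt_4 (A : Fin 2 → ℕ) (hA : ∀ i, 2 ≤ A i)
    (p₀ : ℝ) (hp0 : 0 < p₀) (hp0' : p₀ < 1)
    (p₁ : ℝ) (hp1 : p₁ = 1 - p₀)
    (pvec : Fin 2 → ℝ) (hpvec : pvec = ![p₀, p₁])
    (α : Matrix (Fin 2) (Fin 2) ℝ)
    (hα : ∀ i j, α i j = if i = j then 1 / (A i : ℝ) + (1 - 1 / (A i : ℝ)) * pvec i
      else (1 - 1 / (A i : ℝ)) * pvec j)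
    (p : ℝ)
    (hp : p = p₀ * (A 0 : ℝ) * ((A 1 : ℝ) - 1) /
      ((A 0 : ℝ) * (A 1 : ℝ) - p₁ * (A 1 : ℝ) - p₀ * (A 0 : ℝ))) :
    (∀ j, ∑ i, (![p, 1 - p]) i * α i j = (![p, 1 - p]) j) ∧ 0 < p ∧ p < 1 := by
  have ha : (2 : ℝ) ≤ (A 0 : ℝ) := by exact_mod_cast hA 0
  have hb : (2 : ℝ) ≤ (A 1 : ℝ) := by exact_mod_cast hA 1
  set a : ℝ := (A 0 : ℝ) with hadef
  set b : ℝ := (A 1 : ℝ) with hbdef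
  have ha0 : a ≠ 0 := by linarith
  have hb0 : b ≠ 0 := by linarith
  have hDeq : a * b - p₁ * b - p₀ * a = p₀ * (a * (b - 1)) + (1 - p₀) * (b * (a - 1)) := by
    rw [hp1]; ring
  have h1 : 0 < p₀ * (a * (b - 1)) :=
    mul_pos hp0 (mul_pos (by linarith) (by linarith))
  have h2 : 0 < (1 - p₀) * (b * (a - 1)) :=
    mul_pos (by linarith) (mul_pos (by linarith) (by linarith))
  have hD : 0 < a * b - p₁ * b - p₀ * a := by rw [hDeq]; linarith
  have hDne : a * b - p₁ * b - p₀ * a ≠ 0 := ne_of_gt hD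
  have hp' : 0 < p := by
    rw [hp]
    exact div_pos (by nlinarith) hD
  have hp1' : p < 1 := by
    rw [hp, div_lt_one hD, hp1]
    nlinarith [h2]
  refine ⟨?_, hp', hp1'⟩
  intro j
  fin_cases j <;>
    · simp only [Fin.sum_univ_two, hα, hpvec, hp]
      norm_num [Matrix.cons_val_zero, Matrix.cons_val_one, Matrix.head_cons]
      simp only [← hadef, ← hbdef]
      rw [hp1] at hDne ⊢
      have hD' : b * (a - (1 - p₀)) - p₀ * a ≠ 0 := by intro h; apply hDne; linarith
      field_simp
      ring
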